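/- arXiv:1010.2075 — 6 statements merged into one kernel-verified Lean document; each statement's English description precedes it below -/
import Mathlib

section
/- Let α, β, γ, μ, κ, D be real constants with μ D² ≠ 0, and set ν = 0. Then the travelling-wave coefficients A₁(y) = α/(μ D²), A₀ = 0, B₀(y) = β/(μ D²), C₂ = C₁ = 0, C₀(y) = (2γ y + κ − D²)/(μ D²), D₄ = D₃ = 0, D₂(y) = 2γ/(μ D²), D₁ = D₀ = 0 satisfy the ten linearization conditions (L1)–(L10) at every point (x,y) ∈ ℝ² if and only if α = 0, β = 0, and γ = 0. -/
open Real Set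

/-- Partial derivative in the first variable. -/
noncomputable def pdx (f : ℝ → ℝ → ℝ) (x y : ℝ) : ℝ := deriv (fun x' => f x' y) x

/-- Partial derivative in the second variable. -/
noncomputable def pdy (f : ℝ → ℝ → ℝ) (x y : ℝ) : ℝ := deriv (fun y' => f x y') y

/-- The ten linearization conditions (L1)–(L10) at a point `(x, y)`. -/
def LinConds (A1 A0 B0 C2 C1 C0 D4 D3 D2 D1 D0 : ℝ → ℝ → ℝ) (x y : ℝ) : Prop :=
  -- (L1)
  pdy A0 x y - pdx A1 x y = 0 ∧
  -- (L2)
  4 * B0 x y - 3 * A1 x y = 0 ∧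
  -- (L3)
  12 * pdy A1 x y + 3 * (A1 x y) ^ 2 - 8 * C2 x y = 0 ∧
  -- (L4)
  12 * pdx A1 x y + 3 * A0 x y * A1 x y - 4 * C1 x y = 0 ∧
  -- (L5)
  32 * pdy C0 x y + 12 * pdx A0 x y * A1 x y - 16 * pdx C1 x y
    + 3 * (A0 x y) ^ 2 * A1 x y - 4 * A0 x y * C1 x y = 0 ∧
  -- (L6)
  4 * pdy C2 x y + A1 x y * C2 x y - 24 * D4 x y = 0 ∧
  -- (L7)
  4 * pdy C1 x y + A1 x y * C1 x y - 12 * D3 x y = 0 ∧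
  -- (L8)
  16 * pdx C1 x y - 12 * pdx A0 x y * A1 x y - 3 * (A0 x y) ^ 2 * A1 x y
    + 4 * A0 x y * C1 x y + 8 * A1 x y * C0 x y - 32 * D2 x y = 0 ∧
  -- (L9)
  192 * pdx D2 x y + 36 * pdx A0 x y * A0 x y * A1 x y - 48 * pdx A0 x y * C1 x y
    - 48 * pdx C0 x y * A1 x y - 288 * pdy D1 x y + 9 * (A0 x y) ^ 3 * A1 x y
    - 12 * (A0 x y) ^ 2 * C1 x y - 36 * A0 x y * A1 x y * C0 x y
    + 48 * A0 x y * D2 x y + 32 * C0 x y * C1 x y = 0 ∧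
  -- (L10)
  384 * pdx (pdy D1) x y -
    (3 * ((3 * A0 x y * A1 x y - 4 * C1 x y) * (A0 x y) ^ 2
          + 16 * (2 * A1 x y * D1 x y + C0 x y * C1 x y)
          - 16 * (A1 x y * C0 x y - D2 x y) * A0 x y) * A0 x y
      - 32 * (4 * (C1 x y * D1 x y - 2 * C2 x y * D0 x y + C0 x y * D2 x y)
          + (3 * A1 x y * D0 x y - (C0 x y) ^ 2) * A1 x y)
      - 96 * pdy D1 x y * A0 x y + 384 * pdy D0 x y * A1 x y
      + 1536 * pdy (pdy D0) x y
      - 16 * (3 * A0 x y * A1 x y - 4 * C1 x y) * pdx C0 x y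
      + 12 * ((3 * A0 x y * A1 x y - 4 * C1 x y) * A0 x y
          - 4 * (A1 x y * C0 x y - 4 * D2 x y)) * pdx A0 x y) = 0


/-- Case `ν = 0` (with `μ D² ≠ 0`): the travelling-wave coefficients satisfy the ten
linearization conditions (L1)–(L10) at every point of `ℝ²` if and only if
`α = 0`, `β = 0` and `γ = 0`. -/
theorem linconds_case_nu_zero (α β γ μ κ D : ℝ) (hμD : μ * D ^ 2 ≠ 0) :
    (∀ x y : ℝ,
      LinConds
        (fun _ _ => α / (μ * D ^ 2))                       -- A₁
        (fun _ _ => 0)                                     -- A₀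
        (fun _ _ => β / (μ * D ^ 2))                       -- B₀
        (fun _ _ => 0)                                     -- C₂
        (fun _ _ => 0)                                     -- C₁
        (fun _ y => (2 * γ * y + κ - D ^ 2) / (μ * D ^ 2)) -- C₀
        (fun _ _ => 0)                                     -- D₄
        (fun _ _ => 0)                                     -- D₃
        (fun _ _ => 2 * γ / (μ * D ^ 2))                   -- D₂
        (fun _ _ => 0)                                     -- D₁
        (fun _ _ => 0)                                     -- D₀
        x y) ↔
      (α = 0 ∧ β = 0 ∧ γ = 0) := by
  have hC0 : ∀ y : ℝ, deriv (fun y' => (2 * γ * y' + κ - D ^ 2) / (μ * D ^ 2)) y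
      = 2 * γ / (μ * D ^ 2) := by
    intro y
    have h : (fun y' => (2 * γ * y' + κ - D ^ 2) / (μ * D ^ 2))
        = fun y' => (2 * γ / (μ * D ^ 2)) * y' + (κ - D ^ 2) / (μ * D ^ 2) := by
      funext y'; field_simp; ring
    rw [h]
    simpa using (((hasDerivAt_id y).const_mul (2 * γ / (μ * D ^ 2))).add_const
      ((κ - D ^ 2) / (μ * D ^ 2))).deriv
  constructor
  · intro h
    obtain ⟨h1, h2, h3, h4, h5, h6, h7, h8, h9, h10⟩ := h 0 0
    simp only [pdx, pdy, deriv_const] at h2 h3 h5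
    rw [hC0 0] at h5
    have hα : α = 0 := by
      have : (α / (μ * D ^ 2)) ^ 2 = 0 := by linarith
      have := pow_eq_zero_iff (n := 2) (by norm_num) |>.mp this
      exact (div_eq_zero_iff.mp this).resolve_right hμD
    have hγ : γ = 0 := by
      have : 2 * γ / (μ * D ^ 2) = 0 := by linarith
      have := (div_eq_zero_iff.mp this).resolve_right hμD; linarith
    have hβ : β = 0 := by
      rw [hα] at h2
      simp at h2
      rcases h2 with h | h | h
      · exact h
      · exact absurd (by rw [h]; ring) hμD
      · exact absurd (by rw [h]; ring) hμD
    exact ⟨hα, hβ, hγ⟩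
  · rintro ⟨hα, hβ, hγ⟩ x y
    subst hα; subst hβ; subst hγ
    refine ⟨?_, ?_, ?_, ?_, ?_, ?_, ?_, ?_, ?_, ?_⟩ <;>
      simp [LinConds, pdx, pdy, hC0]
end

section
/- Let α, μ, ν, κ, D be real constants with ν ≠ 0, and set γ = 0 and β = 0. Then the travelling-wave coefficients A₁(y) = α/(ν y + μ D²), A₀ = 0, B₀ = 0, C₂ = C₁ = 0, C₀(y) = (κ − D²)/(ν y + μ D²), D₄ = D₃ = D₂ = D₁ = D₀ = 0 satisfy the ten linearization conditions (L1)–(L10) at every point (x,y) with ν y + μ D² ≠ 0 if and only if α = 0 and κ = D². -/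
open Real Set

lemma deriv_div_lin (c a b y : ℝ) (h : a * y + b ≠ 0) :
    deriv (fun y' : ℝ => c / (a * y' + b)) y = -(c * a) / (a * y + b) ^ 2 := by
  have hd : HasDerivAt (fun y' : ℝ => a * y' + b) a y := by
    simpa using ((hasDerivAt_id y).const_mul a).add_const b
  have h2 := (hasDerivAt_const y c).div hd h
  rw [show (fun y' : ℝ => c / (a * y' + b)) = (fun _ => c) / (fun y' => a * y' + b) from rfl, h2.deriv]
  ring

/-- Case `ν ≠ 0`, `γ = 0`, `β = 0`: the travelling-wave coefficients satisfy the ten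
linearization conditions (L1)–(L10) at every point `(x, y)` with `ν y + μ D² ≠ 0`
if and only if `α = 0` and `κ = D²`. -/
theorem linconds_case_gamma_zero_beta_zero (α μ ν κ D : ℝ) (hν : ν ≠ 0) :
    (∀ x y : ℝ, ν * y + μ * D ^ 2 ≠ 0 →
      LinConds
        (fun _ y => α / (ν * y + μ * D ^ 2))               -- A₁
        (fun _ _ => 0)                                     -- A₀
        (fun _ _ => 0)                                     -- B₀
        (fun _ _ => 0)                                     -- C₂
        (fun _ _ => 0)                                     -- C₁
        (fun _ y => (κ - D ^ 2) / (ν * y + μ * D ^ 2))     -- C₀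
        (fun _ _ => 0)                                     -- D₄
        (fun _ _ => 0)                                     -- D₃
        (fun _ _ => 0)                                     -- D₂
        (fun _ _ => 0)                                     -- D₁
        (fun _ _ => 0)                                     -- D₀
        x y) ↔
      (α = 0 ∧ κ = D ^ 2) := by
  constructor
  · intro h
    set y₀ : ℝ := (1 - μ * D ^ 2) / ν with hy₀
    have hden : ν * y₀ + μ * D ^ 2 = 1 := by
      rw [hy₀]
      calc _ = (1 - μ * D ^ 2) * (ν / ν) + μ * D ^ 2 := by ring
        _ = 1 := by rw [div_self hν]; ring
    have h1 := h 0 y₀ (by rw [hden]; norm_num)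
    obtain ⟨_, hL2, _, _, hL5, _⟩ := h1
    have hα : α = 0 := by
      simp only at hL2
      rw [hden] at hL2
      simpa using hL2
    refine ⟨hα, ?_⟩
    -- use L5
    have hpdy : deriv (fun y' => (κ - D ^ 2) / (ν * y' + μ * D ^ 2)) y₀
        = -((κ - D ^ 2) * ν) := by
      rw [deriv_div_lin _ _ _ _ (by rw [hden]; norm_num), hden]
      norm_num
    simp only [pdx, pdy, deriv_const'] at hL5
    rw [hpdy] at hL5
    have hz : (κ - D ^ 2) * ν = 0 := by linarith
    rcases mul_eq_zero.mp hz with h' | h'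
    · linarith
    · exact absurd h' hν
  · rintro ⟨hα, hκ⟩
    subst hα; subst hκ
    intro x y hy
    simp [LinConds, pdx, pdy, zero_div, sub_self]
end

section
/- Let α, μ, ν, κ, D be real constants with ν ≠ 0, and set γ = 0 and β = 3ν. Then the travelling-wave coefficients A₁(y) = α/(ν y + μ D²), A₀ = 0, B₀(y) = 3ν/(ν y + μ D²), C₂ = C₁ = 0, C₀(y) = (κ − D²)/(ν y + μ D²), D₄ = D₃ = D₂ = D₁ = D₀ = 0 satisfy the ten linearization conditions (L1)–(L10) at every point (x,y) with ν y + μ D² ≠ 0 if and only if α = 4ν and κ = D². -/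
open Real Set

lemma pdy_div_lin' (a ν c : ℝ) (y : ℝ) (h : ν * y + c ≠ 0) :
    deriv (fun y' : ℝ => a / (ν * y' + c)) y = -(a * ν) / (ν * y + c) ^ 2 := by
  have h1 : HasDerivAt (fun y' : ℝ => ν * y' + c) ν y := by
    simpa using ((hasDerivAt_id y).const_mul ν).add_const c
  have hd := (hasDerivAt_const y a).div h1 h
  rw [show (fun y' : ℝ => a / (ν * y' + c)) = ((fun _ => a) / fun y' => ν * y' + c) from rfl, hd.deriv]; ring

/-- Case `ν ≠ 0`, `γ = 0`, `β = 3ν`: the travelling-wave coefficients satisfy the ten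
linearization conditions (L1)–(L10) at every point `(x, y)` with `ν y + μ D² ≠ 0`
if and only if `α = 4ν` and `κ = D²`. -/
theorem linconds_case_gamma_zero_beta_three_nu (α μ ν κ D : ℝ) (hν : ν ≠ 0) :
    (∀ x y : ℝ, ν * y + μ * D ^ 2 ≠ 0 →
      LinConds
        (fun _ y => α / (ν * y + μ * D ^ 2))               -- A₁
        (fun _ _ => 0)                                     -- A₀
        (fun _ y => 3 * ν / (ν * y + μ * D ^ 2))           -- B₀
        (fun _ _ => 0)                                     -- C₂
        (fun _ _ => 0)                                     -- C₁
        (fun _ y => (κ - D ^ 2) / (ν * y + μ * D ^ 2))     -- C₀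
        (fun _ _ => 0)                                     -- D₄
        (fun _ _ => 0)                                     -- D₃
        (fun _ _ => 0)                                     -- D₂
        (fun _ _ => 0)                                     -- D₁
        (fun _ _ => 0)                                     -- D₀
        x y) ↔
      (α = 4 * ν ∧ κ = D ^ 2) := by
  constructor
  · intro h
    set y0 : ℝ := (1 - μ * D ^ 2) / ν with hy0
    have hs : ν * y0 + μ * D ^ 2 = 1 := by rw [hy0, mul_div_cancel₀ (1 - μ * D ^ 2) hν]; ring
    obtain ⟨_, hL2, _, _, hL5, _⟩ := h 0 y0 (by rw [hs]; norm_num)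
    simp only [hs] at hL2 hL5
    constructor
    · norm_num at hL2; linarith
    · have hpdy : pdy (fun _ y => (κ - D ^ 2) / (ν * y + μ * D ^ 2)) 0 y0
          = -((κ - D ^ 2) * ν) / (ν * y0 + μ * D ^ 2) ^ 2 :=
        pdy_div_lin' (κ - D ^ 2) ν (μ * D ^ 2) y0 (by rw [hs]; norm_num)
      rw [hs] at hpdy
      simp only [pdx, deriv_const] at hL5
      rw [hpdy] at hL5
      norm_num at hL5
      rcases hL5 with h1 | h2
      · linarith
      · exact absurd h2 hν
  · rintro ⟨hα, hκ⟩ x y hs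
    subst hα hκ
    have hA1 : pdy (fun _ y => 4 * ν / (ν * y + μ * D ^ 2)) x y
        = -(4 * ν * ν) / (ν * y + μ * D ^ 2) ^ 2 :=
      pdy_div_lin' (4 * ν) ν (μ * D ^ 2) y hs
    refine ⟨?_, ?_, ?_, ?_, ?_, ?_, ?_, ?_, ?_, ?_⟩
    · simp [pdx, pdy]
    · field_simp; ring
    · rw [hA1]; field_simp; ring
    · simp [pdx, pdy]
    · simp [pdx, pdy]
    · simp [pdx, pdy]
    · simp [pdx, pdy]
    · simp [pdx, pdy]
    · simp [pdx, pdy]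
    · simp [pdx, pdy]
end

section
/- Let α, β, γ, μ, ν, κ, D be real constants with ν ≠ 0 and γ ≠ 0. Then the travelling-wave coefficients A₁(y) = α/(ν y + μ D²), A₀ = 0, B₀(y) = β/(ν y + μ D²), C₂ = C₁ = 0, C₀(y) = (2γ y + κ − D²)/(ν y + μ D²), D₄ = D₃ = 0, D₂(y) = 2γ/(ν y + μ D²), D₁ = D₀ = 0 satisfy the ten linearization conditions (L1)–(L10) at every point (x,y) with ν y + μ D² ≠ 0 if and only if α = 4ν, β = 3ν, and κ ν = (2γμ + ν) D². -/
open Real Set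

lemma hasDerivAt_inv_lin (c a b y : ℝ) (h : a * y + b ≠ 0) :
    HasDerivAt (fun y' => c / (a * y' + b)) (-(c * a) / (a * y + b) ^ 2) y := by
  have h1 : HasDerivAt (fun y' => a * y' + b) a y := by
    simpa using ((hasDerivAt_id y).const_mul a).add_const b
  have h2 := (hasDerivAt_const y c).div h1 h
  refine h2.congr_deriv ?_
  ring

lemma hasDerivAt_lin_div_lin (p q a b y : ℝ) (h : a * y + b ≠ 0) :
    HasDerivAt (fun y' => (p * y' + q) / (a * y' + b)) ((p * b - a * q) / (a * y + b) ^ 2) y := by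
  have h1 : HasDerivAt (fun y' => a * y' + b) a y := by
    simpa using ((hasDerivAt_id y).const_mul a).add_const b
  have h0 : HasDerivAt (fun y' => p * y' + q) p y := by
    simpa using ((hasDerivAt_id y).const_mul p).add_const q
  have h2 := h0.div h1 h
  refine h2.congr_deriv ?_
  field_simp
  ring

/-- Case `ν ≠ 0`, `γ ≠ 0`: the travelling-wave coefficients satisfy the ten
linearization conditions (L1)–(L10) at every point `(x, y)` with `ν y + μ D² ≠ 0`
if and only if `α = 4ν`, `β = 3ν` and `κ ν = (2γμ + ν) D²`. -/
theorem linconds_case_gamma_ne_zero (α β γ μ ν κ D : ℝ) (hν : ν ≠ 0) (hγ : γ ≠ 0) :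
    (∀ x y : ℝ, ν * y + μ * D ^ 2 ≠ 0 →
      LinConds
        (fun _ y => α / (ν * y + μ * D ^ 2))                       -- A₁
        (fun _ _ => 0)                                             -- A₀
        (fun _ y => β / (ν * y + μ * D ^ 2))                       -- B₀
        (fun _ _ => 0)                                             -- C₂
        (fun _ _ => 0)                                             -- C₁
        (fun _ y => (2 * γ * y + κ - D ^ 2) / (ν * y + μ * D ^ 2)) -- C₀
        (fun _ _ => 0)                                             -- D₄
        (fun _ _ => 0)                                             -- D₃
        (fun _ y => 2 * γ / (ν * y + μ * D ^ 2))                   -- D₂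
        (fun _ _ => 0)                                             -- D₁
        (fun _ _ => 0)                                             -- D₀
        x y) ↔
      (α = 4 * ν ∧ β = 3 * ν ∧ κ * ν = (2 * γ * μ + ν) * D ^ 2) := by
  constructor
  · intro h
    set y₀ : ℝ := (1 - μ * D ^ 2) / ν with hy₀
    have hs1 : ν * y₀ + μ * D ^ 2 = 1 := by
      rw [hy₀]
      field_simp
      ring
    have hne : ν * y₀ + μ * D ^ 2 ≠ 0 := by rw [hs1]; norm_num
    obtain ⟨-, hL2, hL3, -, hL5, -, -, hL8, -, -⟩ := h 0 y₀ hne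
    -- derivative facts at y₀
    have hA1d : deriv (fun y' => α / (ν * y' + μ * D ^ 2)) y₀
        = -(α * ν) / (ν * y₀ + μ * D ^ 2) ^ 2 :=
      (hasDerivAt_inv_lin α ν (μ * D ^ 2) y₀ hne).deriv
    have hC0' : HasDerivAt (fun y' => (2 * γ * y' + κ - D ^ 2) / (ν * y' + μ * D ^ 2))
        ((2 * γ * (μ * D ^ 2) - ν * (κ - D ^ 2)) / (ν * y₀ + μ * D ^ 2) ^ 2) y₀ := by
      have heq : (fun y' => (2 * γ * y' + κ - D ^ 2) / (ν * y' + μ * D ^ 2))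
          = (fun y' : ℝ => (2 * γ * y' + (κ - D ^ 2)) / (ν * y' + μ * D ^ 2)) := by
        funext y'; ring
      rw [heq]
      exact hasDerivAt_lin_div_lin _ _ _ _ _ hne
    have hC0d := hC0'.deriv
    simp only [pdx, pdy] at hL2 hL3 hL5 hL8
    rw [hs1] at hL2 hL3 hL5 hL8 hA1d hC0d
    rw [hA1d] at hL3
    rw [hC0d] at hL5
    simp only [deriv_const'] at hL2 hL3 hL5 hL8
    norm_num at hL2 hL3 hL5 hL8
    -- hL5 gives the κ relation
    have hκ : κ * ν = (2 * γ * μ + ν) * D ^ 2 := by nlinarith [hL5]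
    -- from hL3: α * (α - 4ν) = 0
    have hfac : α * (α - 4 * ν) = 0 := by nlinarith [hL3]
    rcases mul_eq_zero.mp hfac with hα0 | hα4
    · -- α = 0 leads to γ = 0, contradiction
      exfalso
      rw [hα0] at hL8
      norm_num at hL8
      exact hγ hL8
    · have hα : α = 4 * ν := by linarith
      exact ⟨hα, by linarith, hκ⟩
  · rintro ⟨ha, hb, hk⟩ x y hs
    have hA1d : deriv (fun y' => α / (ν * y' + μ * D ^ 2)) y
        = -(α * ν) / (ν * y + μ * D ^ 2) ^ 2 :=
      (hasDerivAt_inv_lin α ν (μ * D ^ 2) y hs).deriv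
    have hC0' : HasDerivAt (fun y' => (2 * γ * y' + κ - D ^ 2) / (ν * y' + μ * D ^ 2))
        ((2 * γ * (μ * D ^ 2) - ν * (κ - D ^ 2)) / (ν * y + μ * D ^ 2) ^ 2) y := by
      have heq : (fun y' => (2 * γ * y' + κ - D ^ 2) / (ν * y' + μ * D ^ 2))
          = (fun y' : ℝ => (2 * γ * y' + (κ - D ^ 2)) / (ν * y' + μ * D ^ 2)) := by
        funext y'; ring
      rw [heq]
      exact hasDerivAt_lin_div_lin _ _ _ _ _ hs
    have hC0d := hC0'.deriv
    have hC0z : (2 * γ * (μ * D ^ 2) - ν * (κ - D ^ 2)) = 0 := by nlinarith [hk]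
    refine ⟨?_, ?_, ?_, ?_, ?_, ?_, ?_, ?_, ?_, ?_⟩
    · simp [pdx, pdy]
    · have : (4:ℝ) * (β / (ν * y + μ * D ^ 2)) - 3 * (α / (ν * y + μ * D ^ 2)) = 0 := by
        rw [ha, hb]; ring
      exact this
    · simp only [pdx, pdy, hA1d, deriv_const]
      rw [ha]; field_simp; ring
    · simp [pdx, pdy]
    · simp only [pdx, pdy, hC0d, deriv_const, hC0z]
      norm_num
    · simp [pdx, pdy]
    · simp [pdx, pdy]
    · simp only [pdx, pdy, deriv_const]
      rw [ha]; field_simp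
      linear_combination 32 * hk
    · simp [pdx, pdy]
    · simp only [pdx, pdy, deriv_const]
      rw [ha]; field_simp
      linear_combination (-(128 * (2 * γ * y + κ - D ^ 2))) * hk
end

section
/- Let μ, ν, D be real constants with ν ≠ 0, set α = 4ν, β = 3ν, γ = 0 and κ = D². Let H : ℝ → ℝ be four times differentiable and suppose there are real constants C₀, C₁, C₂, C₃ such that H(s)²/2 + (μ D²/ν) H(s) = C₀ + C₁ s + C₂ s² + C₃ s³ for all s ∈ ℝ. Then u(x,t) = H(x − Dt) satisfies the PDE u_tt = (κ u + γ u²)_xx + ν u u_xxxx + μ u_xxtt + α u_x u_xxx + β (u_xx)² at every point of ℝ². -/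
open Real Set

/-- `u` satisfies the Boussinesq-type PDE
`u_tt = (κ u + γ u²)_xx + ν u u_xxxx + μ u_xxtt + α u_x u_xxx + β (u_xx)²`
at the point `(x, t)`. -/
def SatisfiesPDE (α β γ μ ν κ : ℝ) (u : ℝ → ℝ → ℝ) (x t : ℝ) : Prop :=
  iteratedDeriv 2 (fun t' => u x t') t =
    iteratedDeriv 2 (fun x' => κ * u x' t + γ * (u x' t) ^ 2) x
    + ν * u x t * iteratedDeriv 4 (fun x' => u x' t) x
    + μ * iteratedDeriv 2 (fun t' => iteratedDeriv 2 (fun x' => u x' t') x) t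
    + α * deriv (fun x' => u x' t) x * iteratedDeriv 3 (fun x' => u x' t) x
    + β * (iteratedDeriv 2 (fun x' => u x' t) x) ^ 2

lemma itd_two (f : ℝ → ℝ) : iteratedDeriv 2 f = deriv (deriv f) := by
  have h1 : iteratedDeriv 2 f = deriv (iteratedDeriv 1 f) := iteratedDeriv_succ
  rw [h1, iteratedDeriv_one]

lemma itd_three (f : ℝ → ℝ) : iteratedDeriv 3 f = deriv (deriv (deriv f)) := by
  have h1 : iteratedDeriv 3 f = deriv (iteratedDeriv 2 f) := iteratedDeriv_succ
  rw [h1, itd_two]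

lemma itd_four (f : ℝ → ℝ) : iteratedDeriv 4 f = deriv (deriv (deriv (deriv f))) := by
  have h1 : iteratedDeriv 4 f = deriv (iteratedDeriv 3 f) := iteratedDeriv_succ
  rw [h1, itd_three]

lemma iteratedDeriv_comp_affine (f : ℝ → ℝ) (n : ℕ)
    (hf : ∀ k < n, Differentiable ℝ (iteratedDeriv k f)) (c a b : ℝ) :
    iteratedDeriv n (fun y => c * f (a * y + b))
      = fun y => c * a ^ n * iteratedDeriv n f (a * y + b) := by
  induction n with
  | zero => funext y; simp
  | succ n ih =>
    rw [iteratedDeriv_succ, ih (fun k hk => hf k (hk.trans (Nat.lt_succ_self n)))]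
    funext y
    have haff : HasDerivAt (fun y : ℝ => a * y + b) a y := by
      simpa using ((hasDerivAt_id y).const_mul a).add_const b
    have hd : HasDerivAt (fun y => c * a ^ n * iteratedDeriv n f (a * y + b))
        (c * a ^ n * (deriv (iteratedDeriv n f) (a * y + b) * a)) y := by
      have h := (((hf n (Nat.lt_succ_self n)) (a * y + b)).hasDerivAt.comp y haff).const_mul
        (c * a ^ n)
      simpa [Function.comp] using h
    rw [hd.deriv, iteratedDeriv_succ]
    ring


lemma fourth_deriv_cubic (C₀ C₁ C₂ C₃ : ℝ) :
    iteratedDeriv 4 (fun s : ℝ => C₀ + C₁ * s + C₂ * s ^ 2 + C₃ * s ^ 3) = fun _ => 0 := by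
  have d0 : deriv (fun s : ℝ => C₀ + C₁ * s + C₂ * s ^ 2 + C₃ * s ^ 3)
      = fun s => C₁ + 2 * C₂ * s + 3 * C₃ * s ^ 2 := by
    funext s
    have h : HasDerivAt (fun s : ℝ => C₀ + C₁ * s + C₂ * s ^ 2 + C₃ * s ^ 3)
        (C₁ + 2 * C₂ * s + 3 * C₃ * s ^ 2) s := by
      have h1 : HasDerivAt (fun s : ℝ => C₁ * s) C₁ s := by
        simpa using (hasDerivAt_id s).const_mul C₁
      have h2 : HasDerivAt (fun s : ℝ => C₂ * s ^ 2) (2 * C₂ * s) s := by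
        have := (hasDerivAt_pow 2 s).const_mul C₂
        refine this.congr_deriv ?_
        push_cast; ring
      have h3 : HasDerivAt (fun s : ℝ => C₃ * s ^ 3) (3 * C₃ * s ^ 2) s := by
        have := (hasDerivAt_pow 3 s).const_mul C₃
        refine this.congr_deriv ?_
        push_cast; ring
      have := (((hasDerivAt_const s C₀).add h1).add h2).add h3
      refine this.congr_deriv ?_
      ring
    exact h.deriv
  have d1 : deriv (fun s : ℝ => C₁ + 2 * C₂ * s + 3 * C₃ * s ^ 2)
      = fun s => 2 * C₂ + 6 * C₃ * s := by
    funext s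
    have h : HasDerivAt (fun s : ℝ => C₁ + 2 * C₂ * s + 3 * C₃ * s ^ 2)
        (2 * C₂ + 6 * C₃ * s) s := by
      have h1 : HasDerivAt (fun s : ℝ => 2 * C₂ * s) (2 * C₂) s := by
        simpa using (hasDerivAt_id s).const_mul (2 * C₂)
      have h2 : HasDerivAt (fun s : ℝ => 3 * C₃ * s ^ 2) (6 * C₃ * s) s := by
        have := (hasDerivAt_pow 2 s).const_mul (3 * C₃)
        refine this.congr_deriv ?_
        push_cast; ring
      have := ((hasDerivAt_const s C₁).add h1).add h2
      refine this.congr_deriv ?_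
      ring
    exact h.deriv
  have d2 : deriv (fun s : ℝ => 2 * C₂ + 6 * C₃ * s) = fun _ => 6 * C₃ := by
    funext s
    have h : HasDerivAt (fun s : ℝ => 2 * C₂ + 6 * C₃ * s) (6 * C₃) s := by
      have h1 : HasDerivAt (fun s : ℝ => 6 * C₃ * s) (6 * C₃) s := by
        simpa using (hasDerivAt_id s).const_mul (6 * C₃)
      have := (hasDerivAt_const s (2 * C₂)).add h1
      refine this.congr_deriv ?_
      ring
    exact h.deriv
  have s4 : iteratedDeriv 4 (fun s : ℝ => C₀ + C₁ * s + C₂ * s ^ 2 + C₃ * s ^ 3)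
      = iteratedDeriv 3 (deriv (fun s : ℝ => C₀ + C₁ * s + C₂ * s ^ 2 + C₃ * s ^ 3)) :=
    iteratedDeriv_succ'
  rw [s4, d0]
  have s3 : iteratedDeriv 3 (fun s : ℝ => C₁ + 2 * C₂ * s + 3 * C₃ * s ^ 2)
      = iteratedDeriv 2 (deriv (fun s : ℝ => C₁ + 2 * C₂ * s + 3 * C₃ * s ^ 2)) :=
    iteratedDeriv_succ'
  rw [s3, d1]
  have s2 : iteratedDeriv 2 (fun s : ℝ => 2 * C₂ + 6 * C₃ * s)
      = iteratedDeriv 1 (deriv (fun s : ℝ => 2 * C₂ + 6 * C₃ * s)) :=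
    iteratedDeriv_succ'
  rw [s2, d2, iteratedDeriv_one]
  funext s
  simp

lemma fourth_deriv_sq (H : ℝ → ℝ) (c : ℝ)
    (h0 : Differentiable ℝ H) (h1 : Differentiable ℝ (deriv H))
    (h2 : Differentiable ℝ (deriv (deriv H)))
    (h3 : Differentiable ℝ (deriv (deriv (deriv H)))) :
    iteratedDeriv 4 (fun s => H s ^ 2 / 2 + c * H s) = fun s =>
      H s * deriv (deriv (deriv (deriv H))) s
      + 4 * deriv H s * deriv (deriv (deriv H)) s
      + 3 * (deriv (deriv H) s) ^ 2
      + c * deriv (deriv (deriv (deriv H))) s := by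
  have d0 : deriv (fun s => H s ^ 2 / 2 + c * H s)
      = fun s => H s * deriv H s + c * deriv H s := by
    funext s
    have h := (((h0 s).hasDerivAt.pow 2).div_const 2).add ((h0 s).hasDerivAt.const_mul c)
    erw [h.deriv]
    push_cast; ring
  have d1 : deriv (fun s => H s * deriv H s + c * deriv H s)
      = fun s => deriv H s * deriv H s + H s * deriv (deriv H) s + c * deriv (deriv H) s := by
    funext s
    have h := ((h0 s).hasDerivAt.mul (h1 s).hasDerivAt).add ((h1 s).hasDerivAt.const_mul c)
    erw [h.deriv]
  have d2 : deriv (fun s => deriv H s * deriv H s + H s * deriv (deriv H) s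
        + c * deriv (deriv H) s)
      = fun s => 3 * deriv H s * deriv (deriv H) s + H s * deriv (deriv (deriv H)) s
        + c * deriv (deriv (deriv H)) s := by
    funext s
    have h := (((h1 s).hasDerivAt.mul (h1 s).hasDerivAt).add
      ((h0 s).hasDerivAt.mul (h2 s).hasDerivAt)).add ((h2 s).hasDerivAt.const_mul c)
    erw [h.deriv]
    ring
  have d3 : deriv (fun s => 3 * deriv H s * deriv (deriv H) s
        + H s * deriv (deriv (deriv H)) s + c * deriv (deriv (deriv H)) s)
      = fun s => H s * deriv (deriv (deriv (deriv H))) s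
        + 4 * deriv H s * deriv (deriv (deriv H)) s
        + 3 * (deriv (deriv H) s) ^ 2
        + c * deriv (deriv (deriv (deriv H))) s := by
    funext s
    have h := ((((h1 s).hasDerivAt.const_mul 3).mul (h2 s).hasDerivAt).add
      ((h0 s).hasDerivAt.mul (h3 s).hasDerivAt)).add ((h3 s).hasDerivAt.const_mul c)
    erw [h.deriv]
    ring
  have s4 : iteratedDeriv 4 (fun s => H s ^ 2 / 2 + c * H s)
      = iteratedDeriv 3 (deriv (fun s => H s ^ 2 / 2 + c * H s)) := iteratedDeriv_succ'
  rw [s4, d0]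
  have s3 : iteratedDeriv 3 (fun s => H s * deriv H s + c * deriv H s)
      = iteratedDeriv 2 (deriv (fun s => H s * deriv H s + c * deriv H s)) :=
    iteratedDeriv_succ'
  rw [s3, d1]
  have s2 : iteratedDeriv 2 (fun s => deriv H s * deriv H s + H s * deriv (deriv H) s
        + c * deriv (deriv H) s)
      = iteratedDeriv 1 (deriv (fun s => deriv H s * deriv H s + H s * deriv (deriv H) s
        + c * deriv (deriv H) s)) := iteratedDeriv_succ'
  rw [s2, d2, iteratedDeriv_one, d3]


/-- With `α = 4ν`, `β = 3ν`, `γ = 0`, `κ = D²` (`ν ≠ 0`): if a four times differentiable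
`H` satisfies the implicit relation `H²/2 + (μD²/ν) H = C₀ + C₁ s + C₂ s² + C₃ s³`,
then `u(x,t) = H(x − Dt)` satisfies the PDE
`u_tt = (κ u + γ u²)_xx + ν u u_xxxx + μ u_xxtt + α u_x u_xxx + β (u_xx)²`
at every point of `ℝ²`. -/
theorem implicit_wave_satisfies_pde (μ ν D : ℝ) (hν : ν ≠ 0) (H : ℝ → ℝ)
    (hH : ∀ k < 4, Differentiable ℝ (iteratedDeriv k H))
    (C₀ C₁ C₂ C₃ : ℝ)
    (hrel : ∀ s : ℝ,
      (H s) ^ 2 / 2 + (μ * D ^ 2 / ν) * H s = C₀ + C₁ * s + C₂ * s ^ 2 + C₃ * s ^ 3) :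
    ∀ x t : ℝ,
      SatisfiesPDE (4 * ν) (3 * ν) 0 μ ν (D ^ 2) (fun x' t' => H (x' - D * t')) x t := by
  intro x t
  have hh0 : Differentiable ℝ H := by simpa [iteratedDeriv_zero] using hH 0 (by norm_num)
  have hh1 : Differentiable ℝ (deriv H) := by
    simpa [iteratedDeriv_one] using hH 1 (by norm_num)
  have hh2 : Differentiable ℝ (deriv (deriv H)) := by
    have := hH 2 (by norm_num); rwa [itd_two] at this
  have hh3 : Differentiable ℝ (deriv (deriv (deriv H))) := by
    have := hH 3 (by norm_num); rwa [itd_three] at this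
  have hf2 : ∀ k < 2, Differentiable ℝ (iteratedDeriv k H) := fun k hk => hH k (by omega)
  have hf3 : ∀ k < 3, Differentiable ℝ (iteratedDeriv k H) := fun k hk => hH k (by omega)
  have hstep : ∀ k < 2, Differentiable ℝ (iteratedDeriv k (deriv (deriv H))) := by
    intro k hk
    interval_cases k
    · simpa [iteratedDeriv_zero] using hh2
    · simpa [iteratedDeriv_one] using hh3
  -- key algebraic identity
  have key' : ∀ s0 : ℝ, ν * (H s0 * deriv (deriv (deriv (deriv H))) s0)
      + μ * D ^ 2 * deriv (deriv (deriv (deriv H))) s0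
      + 4 * ν * (deriv H s0 * deriv (deriv (deriv H)) s0)
      + 3 * ν * (deriv (deriv H) s0) ^ 2 = 0 := by
    intro s0
    have hG : (fun s => H s ^ 2 / 2 + μ * D ^ 2 / ν * H s)
        = fun s : ℝ => C₀ + C₁ * s + C₂ * s ^ 2 + C₃ * s ^ 3 := funext hrel
    have e := fourth_deriv_sq H (μ * D ^ 2 / ν) hh0 hh1 hh2 hh3
    rw [hG, fourth_deriv_cubic] at e
    have h := congrFun e.symm s0
    calc ν * (H s0 * deriv (deriv (deriv (deriv H))) s0)
          + μ * D ^ 2 * deriv (deriv (deriv (deriv H))) s0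
          + 4 * ν * (deriv H s0 * deriv (deriv (deriv H)) s0)
          + 3 * ν * (deriv (deriv H) s0) ^ 2
        = ν * (H s0 * deriv (deriv (deriv (deriv H))) s0
            + 4 * deriv H s0 * deriv (deriv (deriv H)) s0
            + 3 * (deriv (deriv H) s0) ^ 2
            + μ * D ^ 2 / ν * deriv (deriv (deriv (deriv H))) s0) := by
          field_simp; ring
      _ = ν * 0 := by rw [h]
      _ = 0 := mul_zero ν
  simp only [SatisfiesPDE]
  -- time second derivative
  have Et : (fun t' => H (x - D * t')) = fun t' => 1 * H (-D * t' + x) := by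
    funext t'
    rw [one_mul, show x - D * t' = -D * t' + x by ring]
  have A1 : iteratedDeriv 2 (fun t' => H (x - D * t')) t
      = D ^ 2 * deriv (deriv H) (x - D * t) := by
    rw [Et]
    simp only [iteratedDeriv_comp_affine H 2 hf2 1 (-D) x]
    simp only [itd_two]
    rw [show -D * t + x = x - D * t by ring]
    ring
  -- spatial rewrite
  have Ex : (fun x' => H (x' - D * t)) = fun x' => 1 * H (1 * x' + -(D * t)) := by
    funext x'
    rw [one_mul, show x' - D * t = 1 * x' + -(D * t) by ring]
  have A2 : iteratedDeriv 2 (fun x' => D ^ 2 * H (x' - D * t) + 0 * H (x' - D * t) ^ 2) x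
      = D ^ 2 * deriv (deriv H) (x - D * t) := by
    have E : (fun x' => D ^ 2 * H (x' - D * t) + 0 * H (x' - D * t) ^ 2)
        = fun x' => D ^ 2 * H (1 * x' + -(D * t)) := by
      funext x'
      rw [zero_mul, add_zero, show x' - D * t = 1 * x' + -(D * t) by ring]
    rw [E]
    simp only [iteratedDeriv_comp_affine H 2 hf2 (D ^ 2) 1 (-(D * t))]
    simp only [itd_two, one_pow, mul_one, one_mul]
    rw [show x + -(D * t) = x - D * t by ring]
  have A3 : iteratedDeriv 4 (fun x' => H (x' - D * t)) x
      = deriv (deriv (deriv (deriv H))) (x - D * t) := by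
    rw [Ex]
    simp only [iteratedDeriv_comp_affine H 4 hH 1 1 (-(D * t))]
    simp only [itd_four, one_pow, mul_one, one_mul]
    rw [show x + -(D * t) = x - D * t by ring]
  have A4 : iteratedDeriv 2 (fun t' => iteratedDeriv 2 (fun x' => H (x' - D * t')) x) t
      = D ^ 2 * deriv (deriv (deriv (deriv H))) (x - D * t) := by
    have Einner : (fun t' => iteratedDeriv 2 (fun x' => H (x' - D * t')) x)
        = fun t' => 1 * deriv (deriv H) (-D * t' + x) := by
      funext t'
      have E : (fun x' => H (x' - D * t')) = fun x' => 1 * H (1 * x' + -(D * t')) := by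
        funext x'
        rw [one_mul, show x' - D * t' = 1 * x' + -(D * t') by ring]
      rw [E]
      simp only [iteratedDeriv_comp_affine H 2 hf2 1 1 (-(D * t'))]
      simp only [itd_two, one_pow, mul_one, one_mul]
      rw [show x + -(D * t') = -D * t' + x by ring]
    rw [Einner]
    simp only [iteratedDeriv_comp_affine (deriv (deriv H)) 2 hstep 1 (-D) x]
    simp only [itd_two]
    rw [show -D * t + x = x - D * t by ring]
    ring
  have A5 : deriv (fun x' => H (x' - D * t)) x = deriv H (x - D * t) := by
    have haff : HasDerivAt (fun x' : ℝ => x' - D * t) 1 x := by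
      simpa using (hasDerivAt_id x).sub_const (D * t)
    have h := ((hh0 (x - D * t)).hasDerivAt.comp x haff)
    simpa [Function.comp_def] using h.deriv
  have A6 : iteratedDeriv 3 (fun x' => H (x' - D * t)) x
      = deriv (deriv (deriv H)) (x - D * t) := by
    rw [Ex]
    simp only [iteratedDeriv_comp_affine H 3 hf3 1 1 (-(D * t))]
    simp only [itd_three, one_pow, mul_one, one_mul]
    rw [show x + -(D * t) = x - D * t by ring]
  have A7 : iteratedDeriv 2 (fun x' => H (x' - D * t)) x = deriv (deriv H) (x - D * t) := by
    rw [Ex]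
    simp only [iteratedDeriv_comp_affine H 2 hf2 1 1 (-(D * t))]
    simp only [itd_two, one_pow, mul_one, one_mul]
    rw [show x + -(D * t) = x - D * t by ring]
  rw [A1, A2, A3, A4, A5, A6, A7]
  linear_combination -1 * key' (x - D * t)
end

section
/- Let γ, μ, ν, κ, D be real constants with ν ≠ 0, γ/ν > 0 and κν = (2γμ + ν)D², and set ω = √(γ/(5ν)), α = 4ν, β = 3ν. Let I be an open interval contained in (−π/(2ω), π/(2ω)) and let H : I → ℝ be a four times differentiable solution of the travelling-wave ODE (ν H + μ D²) H'''' + 4ν H' H''' + 3ν (H'')² + (2γ H + κ − D²) H'' + 2γ (H')² = 0 on I. Define v on the open interval J = {tan(ωx) : x ∈ I} by v(t) = (1 + t²)^{3/2} · ( H(arctan(t)/ω)²/2 + (D²μ/ν) H(arctan(t)/ω) ), so that v(tan(ωx)) = sec³(ωx)·(H(x)²/2 + (D²μ/ν)H(x)) for x ∈ I. Then v is four times differentiable on J and satisfies the linear equation v''''(t) = 9 (1 + t²)^{−4} v(t) for every t ∈ J. -/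
open Real Set

/-- A function of one real variable is four times differentiable on a set:
`f, f', f'', f'''` are all differentiable at each point of the set. -/
def FourTimesDiffOn (f : ℝ → ℝ) (s : Set ℝ) : Prop :=
  ∀ k < 4, ∀ x ∈ s, DifferentiableAt ℝ (iteratedDeriv k f) x

set_option maxHeartbeats 2000000 in
/-- Case `ν ≠ 0`, `γ/ν > 0`, `κν = (2γμ + ν)D²`, `ω = √(γ/(5ν))`, `α = 4ν`, `β = 3ν`:
if `H` is a four times differentiable solution of the travelling-wave ODE
`(ν H + μ D²) H'''' + 4ν H' H''' + 3ν (H'')² + (2γ H + κ − D²) H'' + 2γ (H')² = 0`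
on an open interval `I ⊆ (−π/(2ω), π/(2ω))`, then
`v(t) = (1 + t²)^{3/2} (H(arctan(t)/ω)²/2 + (D²μ/ν) H(arctan(t)/ω))` is four times
differentiable on `J = tan(ω ·) '' I` and satisfies `v''''(t) = 9 (1 + t²)⁻⁴ v(t)`
on `J`. -/
theorem linearized_equation (γ μ ν κ D : ℝ) (hν : ν ≠ 0) (hpos : γ / ν > 0)
    (hκ : κ * ν = (2 * γ * μ + ν) * D ^ 2)
    (ω : ℝ) (hω : ω = Real.sqrt (γ / (5 * ν)))
    (I : Set ℝ) (hI : IsOpen I) (hI' : I.OrdConnected)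
    (hIsub : I ⊆ Set.Ioo (-(Real.pi / (2 * ω))) (Real.pi / (2 * ω)))
    (H : ℝ → ℝ) (hH : FourTimesDiffOn H I)
    (hODE : ∀ x ∈ I,
      (ν * H x + μ * D ^ 2) * iteratedDeriv 4 H x
        + 4 * ν * deriv H x * iteratedDeriv 3 H x
        + 3 * ν * (iteratedDeriv 2 H x) ^ 2
        + (2 * γ * H x + κ - D ^ 2) * iteratedDeriv 2 H x
        + 2 * γ * (deriv H x) ^ 2 = 0)
    (v : ℝ → ℝ)
    (hv : ∀ t : ℝ,
      v t = Real.sqrt (1 + t ^ 2) ^ 3 *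
        ((H (Real.arctan t / ω)) ^ 2 / 2 + (D ^ 2 * μ / ν) * H (Real.arctan t / ω))) :
    FourTimesDiffOn v ((fun x => Real.tan (ω * x)) '' I) ∧
      ∀ t ∈ (fun x => Real.tan (ω * x)) '' I,
        iteratedDeriv 4 v t = 9 / (1 + t ^ 2) ^ 4 * v t := by
  -- basic facts about ω
  have hpos5 : γ / (5 * ν) > 0 := by
    have : γ / (5 * ν) = (γ / ν) / 5 := by ring
    rw [this]; linarith
  have hω0 : 0 < ω := by rw [hω]; exact Real.sqrt_pos.mpr hpos5
  have hωne : ω ≠ 0 := ne_of_gt hω0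
  have hω2 : ω ^ 2 = γ / (5 * ν) := by rw [hω, sq_sqrt hpos5.le]
  have hγ : γ = 5 * ν * ω ^ 2 := by
    field_simp at hω2; linarith
  set c : ℝ := D ^ 2 * μ / ν with hc
  have hκ' : κ = 2 * γ * c + D ^ 2 := by
    rw [hc]; field_simp; linarith [hκ]
  set φ : ℝ → ℝ := fun u => Real.arctan u / ω with hφ
  -- the image set is a preimage
  have hJeq : ((fun x => Real.tan (ω * x)) '' I) = φ ⁻¹' I := by
    ext t
    constructor
    · rintro ⟨x, hxI, rfl⟩
      have hx1 := (hIsub hxI).1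
      have hx2 := (hIsub hxI).2
      have hmulpos : ω * (Real.pi / (2 * ω)) = Real.pi / 2 := by
        field_simp
      have hmulneg : ω * (-(Real.pi / (2 * ω))) = -(Real.pi / 2) := by
        field_simp
      have h1 : -(Real.pi / 2) < ω * x := by
        have := mul_lt_mul_of_pos_left hx1 hω0
        linarith [hmulneg ▸ this]
      have h2 : ω * x < Real.pi / 2 := by
        have := mul_lt_mul_of_pos_left hx2 hω0
        linarith [hmulpos ▸ this]
      show Real.arctan (Real.tan (ω * x)) / ω ∈ I
      have hex : ω * x / ω = x := by field_simp
      rw [Real.arctan_tan h1 h2, hex]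
      exact hxI
    · intro ht
      exact ⟨φ t, ht, by
        show Real.tan (ω * (Real.arctan t / ω)) = t
        rw [mul_div_cancel₀ _ hωne, Real.tan_arctan]⟩
  rw [hJeq]
  have hJopen : IsOpen (φ ⁻¹' I) :=
    (Real.continuous_arctan.div_const ω).isOpen_preimage I hI
  -- auxiliary functions
  set s : ℝ → ℝ := fun u => Real.sqrt (1 + u ^ 2) with hs
  set p0 : ℝ → ℝ := fun u => H (φ u) with hp0def
  set p1 : ℝ → ℝ := fun u => deriv H (φ u) with hp1def
  set p2 : ℝ → ℝ := fun u => iteratedDeriv 2 H (φ u) with hp2def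
  set p3 : ℝ → ℝ := fun u => iteratedDeriv 3 H (φ u) with hp3def
  set g0 : ℝ → ℝ := fun u => (p0 u) ^ 2 / 2 + c * p0 u with hg0def
  set g1 : ℝ → ℝ := fun u => (p0 u + c) * p1 u with hg1def
  set g2 : ℝ → ℝ := fun u => (p0 u + c) * p2 u + (p1 u) ^ 2 with hg2def
  set g3 : ℝ → ℝ := fun u => (p0 u + c) * p3 u + 3 * (p1 u * p2 u) with hg3def
  set V1 : ℝ → ℝ := fun u => 3 * u * s u * g0 u + s u * g1 u / ω with hV1def
  set V2 : ℝ → ℝ := fun u =>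
    ((3 * s u ^ 2 + 3 * u ^ 2) * g0 u + 4 * u * g1 u / ω + g2 u / ω ^ 2) / s u with hV2def
  set V3 : ℝ → ℝ := fun u =>
    ((9 * u * s u ^ 2 - 3 * u ^ 3) * g0 u + (7 * s u ^ 2 - u ^ 2) * g1 u / ω
      + 3 * u * g2 u / ω ^ 2 + g3 u / ω ^ 3) / s u ^ 3 with hV3def
  set V4 : ℝ → ℝ := fun u =>
    (9 * (s u ^ 2 - u ^ 2) ^ 2 * g0 u
      + (10 * s u ^ 2 - 10 * u ^ 2 - 10) * g2 u / ω ^ 2) / s u ^ 5 with hV4def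
  have hveq : v = fun u => (s u) ^ 3 * g0 u := by
    funext u; rw [hv u]
  -- the key derivative computations
  have key : ∀ t ∈ φ ⁻¹' I, HasDerivAt v (V1 t) t ∧ HasDerivAt V1 (V2 t) t ∧
      HasDerivAt V2 (V3 t) t ∧ HasDerivAt V3 (V4 t) t := by
    intro t ht
    have hx : φ t ∈ I := ht
    have h1t : (0:ℝ) < 1 + t ^ 2 := by positivity
    have hst : 0 < s t := Real.sqrt_pos.mpr h1t
    have hsne : s t ≠ 0 := ne_of_gt hst
    have hss : s t * s t = 1 + t ^ 2 := Real.mul_self_sqrt h1t.le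
    have hss2 : s t ^ 2 = 1 + t ^ 2 := Real.sq_sqrt h1t.le
    have hsd : HasDerivAt s (t / s t) t := by
      have h2 : HasDerivAt (fun u : ℝ => 1 + u ^ 2) (2 * t) t := by
        simpa using ((hasDerivAt_pow 2 t).const_add 1)
      have h := (Real.hasDerivAt_sqrt h1t.ne').comp t h2
      refine h.congr_deriv ?_
      rw [hs]; field_simp
    have hφd : HasDerivAt φ (1 / ((1 + t ^ 2) * ω)) t := by
      have h := (Real.hasDerivAt_arctan t).div_const ω
      have e : (1:ℝ) / (1 + t ^ 2) / ω = 1 / ((1 + t ^ 2) * ω) := div_div 1 (1 + t ^ 2) ω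
      rw [e] at h; exact h
    have hpd : ∀ k, k < 4 → HasDerivAt (fun u => iteratedDeriv k H (φ u))
        (iteratedDeriv (k + 1) H (φ t) * (1 / ((1 + t ^ 2) * ω))) t := by
      intro k hk
      have hd := (hH k hk _ hx).hasDerivAt
      rw [iteratedDeriv_succ]
      exact HasDerivAt.comp t hd hφd
    have hp0 : HasDerivAt p0 (p1 t * (1 / ((1 + t ^ 2) * ω))) t := by
      have := hpd 0 (by norm_num)
      simpa [iteratedDeriv_zero, iteratedDeriv_one, hp0def, hp1def] using this
    have hp1 : HasDerivAt p1 (p2 t * (1 / ((1 + t ^ 2) * ω))) t := by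
      have := hpd 1 (by norm_num)
      simpa [iteratedDeriv_one, hp1def, hp2def] using this
    have hp2 : HasDerivAt p2 (p3 t * (1 / ((1 + t ^ 2) * ω))) t := by
      have := hpd 2 (by norm_num)
      simpa [hp2def, hp3def] using this
    have hp3 : HasDerivAt p3 (iteratedDeriv 4 H (φ t) * (1 / ((1 + t ^ 2) * ω))) t := by
      have := hpd 3 (by norm_num)
      simpa [hp3def] using this
    set p4 : ℝ := iteratedDeriv 4 H (φ t) with hp4def
    have hg0 : HasDerivAt g0 (g1 t * (1 / ((1 + t ^ 2) * ω))) t := by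
      have h := ((hp0.pow 2).div_const 2).add (hp0.const_mul c)
      refine h.congr_deriv ?_
      rw [hg1def]; push_cast; ring
    have hg1 : HasDerivAt g1 (g2 t * (1 / ((1 + t ^ 2) * ω))) t := by
      have h := (hp0.add_const c).mul hp1
      refine h.congr_deriv ?_
      rw [hg2def]; ring
    have hg2 : HasDerivAt g2 (g3 t * (1 / ((1 + t ^ 2) * ω))) t := by
      have h := ((hp0.add_const c).mul hp2).add (hp1.pow 2)
      refine h.congr_deriv ?_
      rw [hg3def]; push_cast; ring
    have hg3 : HasDerivAt g3
        (((p0 t + c) * p4 + 4 * p1 t * p3 t + 3 * (p2 t) ^ 2) * (1 / ((1 + t ^ 2) * ω))) t := by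
      have h := ((hp0.add_const c).mul hp3).add ((hp1.mul hp2).const_mul 3)
      refine h.congr_deriv ?_
      ring
    refine ⟨?_, ?_, ?_, ?_⟩
    · rw [hveq]
      have h := (hsd.pow 3).mul hg0
      refine h.congr_deriv ?_
      simp only [Pi.mul_apply, Pi.pow_apply, Pi.add_apply, Pi.sub_apply]
      rw [hV1def, ← hss]
      field_simp
      ring
    · -- V1 → V2
      have h := ((((hasDerivAt_id' t).const_mul (3:ℝ)).mul hsd).mul hg0).add
        ((hsd.mul hg1).div_const ω)
      refine h.congr_deriv ?_
      simp only [Pi.mul_apply, Pi.pow_apply, Pi.add_apply, Pi.sub_apply]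
      rw [hV2def, ← hss2]
      field_simp
      ring
    · -- V2 → V3
      have hN := ((((hsd.pow 2).const_mul (3:ℝ)).add
          ((hasDerivAt_pow 2 t).const_mul (3:ℝ))).mul hg0).add
        ((((hasDerivAt_id' t).const_mul (4:ℝ)).mul hg1).div_const ω) |>.add
        (hg2.div_const (ω ^ 2))
      have h := hN.div hsd hsne
      refine h.congr_deriv ?_
      simp only [Pi.mul_apply, Pi.pow_apply, Pi.add_apply, Pi.sub_apply]
      rw [hV3def, ← hss2]
      field_simp
      ring
    · -- V3 → V4, using the ODE
      have hOD : (ν * p0 t + μ * D ^ 2) * p4 + 4 * ν * p1 t * p3 t + 3 * ν * p2 t ^ 2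
          + (2 * γ * p0 t + κ - D ^ 2) * p2 t + 2 * γ * p1 t ^ 2 = 0 := hODE (φ t) hx
      have hνc : ν * c = D ^ 2 * μ := by rw [hc]; field_simp
      have hG4 : (p0 t + c) * p4 + 4 * p1 t * p3 t + 3 * p2 t ^ 2
          = -(10 * ω ^ 2) * g2 t := by
        simp only [hg2def]
        apply mul_left_cancel₀ hν
        linear_combination hOD + p4 * hνc
          + (-(2 * p0 t * p2 t) - 2 * p1 t ^ 2 - 2 * c * p2 t) * hγ + (-(p2 t)) * hκ'
      have hg3' : HasDerivAt g3 ((-(10 * ω ^ 2) * g2 t) * (1 / ((1 + t ^ 2) * ω))) t := by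
        rw [← hG4]; exact hg3
      have hM := (((((hasDerivAt_id' t).const_mul (9:ℝ)).mul (hsd.pow 2)).sub
          ((hasDerivAt_pow 3 t).const_mul (3:ℝ))).mul hg0).add
        (((((hsd.pow 2).const_mul (7:ℝ)).sub (hasDerivAt_pow 2 t)).mul hg1).div_const ω)
        |>.add ((((hasDerivAt_id' t).const_mul (3:ℝ)).mul hg2).div_const (ω ^ 2))
        |>.add (hg3'.div_const (ω ^ 3))
      have h := hM.div (hsd.pow 3) (pow_ne_zero 3 hsne)
      refine h.congr_deriv ?_
      simp only [Pi.mul_apply, Pi.pow_apply, Pi.add_apply, Pi.sub_apply]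
      rw [hV4def, ← hss2]
      field_simp
      ring
  -- assemble the conclusion
  have e1 : ∀ u ∈ φ ⁻¹' I, deriv v u = V1 u := fun u hu => ((key u hu).1).deriv
  have ev1 : ∀ t ∈ φ ⁻¹' I, deriv v =ᶠ[nhds t] V1 := fun t ht =>
    Filter.eventuallyEq_of_mem (hJopen.mem_nhds ht) (fun u hu => e1 u hu)
  have e2 : ∀ u ∈ φ ⁻¹' I, iteratedDeriv 2 v u = V2 u := by
    intro u hu
    rw [show (2:ℕ) = 1 + 1 from rfl, iteratedDeriv_succ, iteratedDeriv_one,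
      Filter.EventuallyEq.deriv_eq (ev1 u hu)]
    exact ((key u hu).2.1).deriv
  have ev2 : ∀ t ∈ φ ⁻¹' I, iteratedDeriv 2 v =ᶠ[nhds t] V2 := fun t ht =>
    Filter.eventuallyEq_of_mem (hJopen.mem_nhds ht) (fun u hu => e2 u hu)
  have e3 : ∀ u ∈ φ ⁻¹' I, iteratedDeriv 3 v u = V3 u := by
    intro u hu
    rw [show (3:ℕ) = 2 + 1 from rfl, iteratedDeriv_succ,
      Filter.EventuallyEq.deriv_eq (ev2 u hu)]
    exact ((key u hu).2.2.1).deriv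
  have ev3 : ∀ t ∈ φ ⁻¹' I, iteratedDeriv 3 v =ᶠ[nhds t] V3 := fun t ht =>
    Filter.eventuallyEq_of_mem (hJopen.mem_nhds ht) (fun u hu => e3 u hu)
  have e4 : ∀ u ∈ φ ⁻¹' I, iteratedDeriv 4 v u = V4 u := by
    intro u hu
    rw [show (4:ℕ) = 3 + 1 from rfl, iteratedDeriv_succ,
      Filter.EventuallyEq.deriv_eq (ev3 u hu)]
    exact ((key u hu).2.2.2).deriv
  constructor
  · intro k hk t ht
    interval_cases k
    · rw [iteratedDeriv_zero]
      exact ((key t ht).1).differentiableAt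
    · have heq : iteratedDeriv 1 v =ᶠ[nhds t] V1 := by
        rw [iteratedDeriv_one]; exact ev1 t ht
      exact (Filter.EventuallyEq.differentiableAt_iff heq).mpr ((key t ht).2.1).differentiableAt
    · exact (Filter.EventuallyEq.differentiableAt_iff (ev2 t ht)).mpr
        ((key t ht).2.2.1).differentiableAt
    · exact (Filter.EventuallyEq.differentiableAt_iff (ev3 t ht)).mpr
        ((key t ht).2.2.2).differentiableAt
  · intro t ht
    rw [e4 t ht]
    simp only [hV4def, hveq]
    have h1t : (0:ℝ) < 1 + t ^ 2 := by positivity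
    have hst : 0 < s t := Real.sqrt_pos.mpr h1t
    have hss2 : s t ^ 2 = 1 + t ^ 2 := Real.sq_sqrt h1t.le
    have hsne : s t ≠ 0 := ne_of_gt hst
    have h8 : (1 + t ^ 2) ^ 4 = s t ^ 8 := by rw [← hss2]; ring
    rw [hss2, h8]
    field_simp
    ring
end
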